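/- (Pólya's theorem) Let f ∈ ℝ[X₁,…,Xₙ] be homogeneous with f > 0 on the simplex Δ = {x ∈ [0,∞)ⁿ | x₁+⋯+xₙ = 1}. Then there exists k ∈ ℕ such that all coefficients of (X₁+⋯+Xₙ)^k · f are nonnegative. -/

import Mathlib

open Finset MvPolynomial

lemma castDesc (n k : ℕ) : ((n.descFactorial k : ℕ) : ℝ) = ∏ j ∈ Finset.range k, ((n:ℝ) - j) := by
  induction k with
  | zero => simp
  | succ k ih =>
    rw [Nat.descFactorial_succ, Finset.prod_range_succ, ← ih]
    rcases le_or_gt k n with h | h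
    · push_cast [Nat.cast_sub h]; ring
    · rw [Nat.descFactorial_of_lt h]; simp

lemma absProdSub {ι : Type*} (s : Finset ι) (a b : ι → ℝ)
    (ha : ∀ i ∈ s, |a i| ≤ 1) (hb : ∀ i ∈ s, |b i| ≤ 1) :
    |∏ i ∈ s, a i - ∏ i ∈ s, b i| ≤ ∑ i ∈ s, |a i - b i| := by
  induction s using Finset.cons_induction with
  | empty => simp
  | cons j s hj ih =>
    rw [Finset.prod_cons, Finset.prod_cons, Finset.sum_cons]
    have hbs : |∏ i ∈ s, b i| ≤ 1 := by
      rw [Finset.abs_prod]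
      exact Finset.prod_le_one (fun i _ => abs_nonneg _) (fun i hi => hb i (Finset.mem_cons_of_mem hi))
    calc |a j * ∏ i ∈ s, a i - b j * ∏ i ∈ s, b i|
        = |a j * (∏ i ∈ s, a i - ∏ i ∈ s, b i) + (a j - b j) * ∏ i ∈ s, b i| := by ring_nf
      _ ≤ |a j| * |∏ i ∈ s, a i - ∏ i ∈ s, b i| + |a j - b j| * |∏ i ∈ s, b i| := by
          refine (abs_add_le _ _).trans ?_; rw [abs_mul, abs_mul]
      _ ≤ 1 * (∑ i ∈ s, |a i - b i|) + |a j - b j| * 1 := by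
          refine add_le_add (mul_le_mul (ha j (Finset.mem_cons_self j s))
            (ih (fun i hi => ha i (Finset.mem_cons_of_mem hi)) (fun i hi => hb i (Finset.mem_cons_of_mem hi)))
            (abs_nonneg _) zero_le_one) (mul_le_mul_of_nonneg_left hbs (abs_nonneg _))
      _ = |a j - b j| + ∑ i ∈ s, |a i - b i| := by ring

lemma coeffSumXPow (n k : ℕ) (δ : Fin n →₀ ℕ) :
    ((∑ i, X i : MvPolynomial (Fin n) ℝ)^k).coeff δ =
      if (∑ i, δ i) = k then (Nat.multinomial Finset.univ ⇑δ : ℝ) else 0 := by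
  rw [Finset.sum_pow_eq_sum_piAntidiag]
  rw [MvPolynomial.coeff_sum]
  have key : ∀ γ ∈ piAntidiag (univ : Finset (Fin n)) k,
      MvPolynomial.coeff δ ((Nat.multinomial univ γ : MvPolynomial (Fin n) ℝ) * ∏ i, X i ^ γ i) =
        if γ = ⇑δ then (Nat.multinomial Finset.univ ⇑δ : ℝ) else 0 := by
    intro γ hγ
    have hmono : (∏ i, (X i : MvPolynomial (Fin n) ℝ) ^ γ i) =
        monomial (Finsupp.equivFunOnFinite.symm γ) 1 := by
      rw [← prod_X_pow_eq_monomial]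
      refine (Finset.prod_subset (Finset.subset_univ _) ?_).symm
      intro i _ hi
      have : γ i = 0 := by
        exact Finsupp.notMem_support_iff.mp hi
      simp [Finsupp.equivFunOnFinite, this]
    rw [hmono]
    rw [show ((Nat.multinomial univ γ : MvPolynomial (Fin n) ℝ)) = C (Nat.multinomial univ γ : ℝ) by
      rfl]
    rw [coeff_C_mul, coeff_monomial]
    have hiff : Finsupp.equivFunOnFinite.symm γ = δ ↔ γ = ⇑δ := by
      constructor
      · intro h; rw [← h]; simp [Finsupp.equivFunOnFinite]; rfl
      · intro h; subst h; simp
    rw [if_congr hiff rfl rfl]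
    split_ifs with h <;> simp [h]
  rw [Finset.sum_congr rfl key]
  split_ifs with hs
  · rw [Finset.sum_ite_eq']
    rw [if_pos]
    rw [mem_piAntidiag]
    exact ⟨hs, fun i _ => Finset.mem_univ i⟩
  · refine Finset.sum_eq_zero fun γ hγ => ?_
    rw [if_neg]
    rintro rfl
    rw [mem_piAntidiag] at hγ
    exact hs hγ.1

lemma keyIdentity (n d k : ℕ) (f : MvPolynomial (Fin n) ℝ) (hf : f.IsHomogeneous d)
    (β : Fin n →₀ ℕ) (hβ : ∑ i, β i = d + k) :
    (∏ i, ((β i).factorial : ℝ)) * ((∑ i, X i : MvPolynomial (Fin n) ℝ)^k * f).coeff β =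
      (k.factorial : ℝ) *
        ∑ α ∈ f.support, f.coeff α * ∏ i, (((β i).descFactorial (α i) : ℕ) : ℝ) := by
  rw [show (((∑ i, X i : MvPolynomial (Fin n) ℝ))^k * f)
      = ∑ α ∈ f.support, ((∑ i, X i)^k * monomial α (f.coeff α)) by
    conv_lhs => rw [f.as_sum]
    rw [Finset.mul_sum]]
  rw [MvPolynomial.coeff_sum, Finset.mul_sum, Finset.mul_sum]
  refine Finset.sum_congr rfl fun α hα => ?_
  rw [coeff_mul_monomial', coeffSumXPow]
  have hdeg : ∑ i, α i = d := by
    have h1 : α.degree = d := by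
      by_contra h
      exact (mem_support_iff.mp hα) (hf.coeff_eq_zero h)
    rw [← h1, Finsupp.degree]
    exact (Finset.sum_subset (Finset.subset_univ _)
      (fun i _ hi => Finsupp.notMem_support_iff.mp hi)).symm
  by_cases hle : α ≤ β
  · have hle' : ∀ i, α i ≤ β i := fun i => Finsupp.le_def.mp hle i
    have hsum : ∑ i, (β - α) i = k := by
      have h2 : ∑ i, ((β i - α i) + α i) = ∑ i, β i :=
        Finset.sum_congr rfl fun i _ => by rw [Nat.sub_add_cancel (hle' i)]
      rw [Finset.sum_add_distrib] at h2
      have : ∀ i, (β - α) i = β i - α i := fun i => Finsupp.tsub_apply β α i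
      simp_rw [this]
      omega
    rw [if_pos hle, if_pos hsum]
    have hnat : (∏ i, (β i).factorial) * Nat.multinomial univ ⇑(β - α)
        = k.factorial * ∏ i, (β i).descFactorial (α i) := by
      have h1 : ∀ i, (β i).factorial = (β i - α i).factorial * (β i).descFactorial (α i) :=
        fun i => (Nat.factorial_mul_descFactorial (hle' i)).symm
      calc (∏ i, (β i).factorial) * Nat.multinomial univ ⇑(β - α)
          = ((∏ i, (β i - α i).factorial) * Nat.multinomial univ ⇑(β - α))
              * ∏ i, (β i).descFactorial (α i) := by
            rw [Finset.prod_congr rfl (fun i _ => h1 i), Finset.prod_mul_distrib]; ring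
        _ = k.factorial * ∏ i, (β i).descFactorial (α i) := by
            congr 1
            have h3 : ∀ i, (β i - α i).factorial = ((β - α) i).factorial :=
              fun i => by rw [Finsupp.tsub_apply]
            rw [Finset.prod_congr rfl (fun i _ => h3 i), Nat.multinomial_spec, hsum]
    have hcast : (∏ i, ((β i).factorial : ℝ)) * (Nat.multinomial univ ⇑(β - α) : ℝ)
        = (k.factorial : ℝ) * ∏ i, (((β i).descFactorial (α i) : ℕ) : ℝ) := by
      exact_mod_cast congrArg (Nat.cast (R := ℝ)) hnat
    linear_combination (f.coeff α) * hcast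
  · rw [if_neg hle]
    obtain ⟨i, hi⟩ : ∃ i, β i < α i := by
      by_contra h
      push_neg at h
      exact hle (Finsupp.le_def.mpr fun i => h i)
    have : ∏ j, (((β j).descFactorial (α j) : ℕ) : ℝ) = 0 :=
      Finset.prod_eq_zero (Finset.mem_univ i)
        (by rw [Nat.descFactorial_of_lt hi]; norm_num)
    rw [this]
    ring

lemma gNonneg (n d : ℕ) (hn : 0 < n) (f : MvPolynomial (Fin n) ℝ) (hf : f.IsHomogeneous d)
    (hpos : ∀ x : Fin n → ℝ, (∀ i, 0 ≤ x i) → ∑ i, x i = 1 → 0 < eval x f) :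
    ∃ k : ℕ, ∀ β : Fin n →₀ ℕ, ∑ i, β i = d + k →
      0 ≤ ∑ α ∈ f.support, f.coeff α * ∏ i, (((β i).descFactorial (α i) : ℕ) : ℝ) := by
  classical
  set Δ : Set (Fin n → ℝ) := {x | (∀ i, 0 ≤ x i) ∧ ∑ i, x i = 1} with hΔdef
  -- compactness
  have hclosed : IsClosed Δ := by
    have h1 : Δ = (⋂ i, {x : Fin n → ℝ | 0 ≤ x i}) ∩ {x | ∑ i, x i = 1} := by
      ext x; simp [hΔdef, Set.mem_iInter]
    rw [h1]
    exact IsClosed.inter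
      (isClosed_iInter fun i => isClosed_le continuous_const (continuous_apply i))
      (isClosed_eq (continuous_finset_sum _ fun i _ => continuous_apply i) continuous_const)
  have hΔc : IsCompact Δ := by
    refine IsCompact.of_isClosed_subset (isCompact_Icc (a := (0 : Fin n → ℝ)) (b := 1)) hclosed ?_
    intro x hx
    rw [Set.mem_Icc]
    refine ⟨fun i => hx.1 i, fun i => ?_⟩
    calc x i ≤ ∑ j, x j := Finset.single_le_sum (fun j _ => hx.1 j) (Finset.mem_univ i)
      _ = 1 := hx.2
  have hΔne : Δ.Nonempty := by
    refine ⟨fun _ => (n : ℝ)⁻¹, fun i => by positivity, ?_⟩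
    simp only [Finset.sum_const, Finset.card_univ, Fintype.card_fin, nsmul_eq_mul]
    exact mul_inv_cancel₀ (by exact_mod_cast hn.ne')
  obtain ⟨z, hzΔ, hz⟩ := hΔc.exists_isMinOn hΔne (MvPolynomial.continuous_eval (p := f)).continuousOn
  set ε : ℝ := eval z f with hεdef
  have hε : 0 < ε := hpos z hzΔ.1 hzΔ.2
  set A : ℝ := ∑ α ∈ f.support, |f.coeff α| with hAdef
  have hA : 0 ≤ A := Finset.sum_nonneg fun α _ => abs_nonneg _
  refine ⟨⌈A * d * d / ε⌉₊ + 1, fun β hβ => ?_⟩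
  set k : ℕ := ⌈A * d * d / ε⌉₊ + 1
  set N : ℕ := d + k with hNdef
  have hN1 : 1 ≤ N := by omega
  have hN0 : (0:ℝ) < N := by exact_mod_cast Nat.lt_of_lt_of_le Nat.zero_lt_one hN1
  have hNε : A * d * d ≤ N * ε := by
    have h1 : A * d * d / ε ≤ (k : ℝ) := by
      calc A * d * d / ε ≤ (⌈A * d * d / ε⌉₊ : ℝ) := Nat.le_ceil _
        _ ≤ (k : ℝ) := by exact_mod_cast Nat.le_succ _
    have h2 : (k : ℝ) ≤ N := by exact_mod_cast Nat.le_add_left k d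
    calc A * d * d = (A * d * d / ε) * ε := by field_simp
      _ ≤ (N : ℝ) * ε := by
          exact mul_le_mul_of_nonneg_right (h1.trans h2) hε.le
  -- the scaled point
  set x : Fin n → ℝ := fun i => (β i : ℝ) / N with hxdef
  have hxnn : ∀ i, 0 ≤ x i := fun i => by positivity
  have hxsum : ∑ i, x i = 1 := by
    rw [← Finset.sum_div]
    rw [show ∑ i, ((β i : ℕ) : ℝ) = (N : ℝ) by exact_mod_cast congrArg (Nat.cast (R := ℝ)) hβ]
    exact div_self hN0.ne'
  have hxle : ∀ i, x i ≤ 1 := by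
    intro i
    rw [hxdef, div_le_one hN0]
    have : β i ≤ N := hβ ▸ Finset.single_le_sum (f := fun j => β j) (fun j _ => Nat.zero_le _) (Finset.mem_univ i)
    exact_mod_cast this
  have hxΔ : x ∈ Δ := ⟨hxnn, hxsum⟩
  have hxeval : ε ≤ eval x f := hz hxΔ
  -- per-monomial estimate
  have hest : ∀ α ∈ f.support,
      |(∏ i, (((β i).descFactorial (α i) : ℕ) : ℝ)) - (N:ℝ)^d * ∏ i, x i ^ α i|
        ≤ (N:ℝ)^d * (d * d / N) := by
    intro α hα
    have hdeg : ∑ i, α i = d := by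
      have h1 : α.degree = d := by
        by_contra h
        exact (mem_support_iff.mp hα) (hf.coeff_eq_zero h)
      rw [← h1, Finsupp.degree]
      exact (Finset.sum_subset (Finset.subset_univ _)
        (fun i _ hi => Finsupp.notMem_support_iff.mp hi)).symm
    have hαle : ∀ i, α i ≤ d := fun i =>
      hdeg ▸ Finset.single_le_sum (f := fun j => α j) (fun j _ => Nat.zero_le _) (Finset.mem_univ i)
    set s : Finset ((_ : Fin n) × ℕ) := Finset.univ.sigma fun i => Finset.range (α i) with hsdef
    have hcard : s.card = d := by
      rw [hsdef, Finset.card_sigma]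
      simpa using hdeg
    have hjd : ∀ p ∈ s, (p.2 : ℝ) ≤ d := by
      rintro ⟨i, j⟩ hp
      rw [hsdef, Finset.mem_sigma] at hp
      have : j < α i := Finset.mem_range.mp hp.2
      exact_mod_cast (this.le.trans (hαle i))
    -- express products over the sigma set
    have hP1 : (∏ i, (((β i).descFactorial (α i) : ℕ) : ℝ))
        = (N:ℝ)^d * ∏ p ∈ s, (x p.1 - (p.2 : ℝ)/N) := by
      have e1 : (∏ i, (((β i).descFactorial (α i) : ℕ) : ℝ))
          = ∏ p ∈ s, ((β p.1 : ℝ) - p.2) := by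
        rw [hsdef, Finset.prod_sigma]
        exact Finset.prod_congr rfl fun i _ => castDesc _ _
      have e2 : ∀ p ∈ s, ((β p.1 : ℝ) - p.2) = (N:ℝ) * (x p.1 - (p.2:ℝ)/N) := by
        intro p _
        rw [hxdef]
        field_simp
      rw [e1, Finset.prod_congr rfl e2, Finset.prod_mul_distrib, Finset.prod_const, hcard]
    have hP2 : (∏ i, x i ^ α i) = ∏ p ∈ s, x p.1 := by
      rw [hsdef, Finset.prod_sigma]
      exact Finset.prod_congr rfl fun i _ => by
        rw [show (∏ j ∈ Finset.range (α i), x (⟨i, j⟩ : (_ : Fin n) × ℕ).fst)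
          = ∏ _j ∈ Finset.range (α i), x i from rfl, Finset.prod_const, Finset.card_range]
    rw [hP1, hP2, ← mul_sub, abs_mul, abs_of_nonneg (by positivity : (0:ℝ) ≤ (N:ℝ)^d)]
    refine mul_le_mul_of_nonneg_left ?_ (by positivity)
    have hb1 : ∀ p ∈ s, |x p.1 - (p.2:ℝ)/N| ≤ 1 := by
      intro p hp
      rw [abs_le]
      constructor
      · have h1 : (p.2 : ℝ)/N ≤ 1 := by
          rw [div_le_one hN0]
          calc (p.2 : ℝ) ≤ d := hjd p hp
            _ ≤ N := by exact_mod_cast Nat.le_add_right d k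
        linarith [hxnn p.1]
      · have h2 : (0:ℝ) ≤ (p.2 : ℝ)/N := div_nonneg (Nat.cast_nonneg _) hN0.le
        linarith [hxle p.1]
    have hb2 : ∀ p ∈ s, |x p.1| ≤ 1 := fun p _ => abs_le.mpr ⟨by linarith [hxnn p.1], hxle p.1⟩
    calc |∏ p ∈ s, (x p.1 - (p.2:ℝ)/N) - ∏ p ∈ s, x p.1|
        ≤ ∑ p ∈ s, |x p.1 - (p.2:ℝ)/N - x p.1| := absProdSub s _ _ hb1 hb2
      _ ≤ ∑ p ∈ s, (d:ℝ)/N := by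
          refine Finset.sum_le_sum fun p hp => ?_
          rw [show x p.1 - (p.2:ℝ)/N - x p.1 = -((p.2:ℝ)/N) by ring, abs_neg,
            abs_of_nonneg (by positivity)]
          gcongr
          exact_mod_cast hjd p hp
      _ = d * d / N := by
          rw [Finset.sum_const, hcard, nsmul_eq_mul]
          ring
  -- conclude
  have heval : eval x f = ∑ α ∈ f.support, f.coeff α * ∏ i, x i ^ α i := eval_eq' x f
  have heq : (∑ α ∈ f.support, f.coeff α * ∏ i, (((β i).descFactorial (α i) : ℕ) : ℝ))
      - (N:ℝ)^d * eval x f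
      = ∑ α ∈ f.support, f.coeff α *
          ((∏ i, (((β i).descFactorial (α i) : ℕ) : ℝ)) - (N:ℝ)^d * ∏ i, x i ^ α i) := by
    rw [heval, Finset.mul_sum, ← Finset.sum_sub_distrib]
    exact Finset.sum_congr rfl fun α _ => by ring
  have habs : |(∑ α ∈ f.support, f.coeff α * ∏ i, (((β i).descFactorial (α i) : ℕ) : ℝ))
      - (N:ℝ)^d * eval x f| ≤ A * ((N:ℝ)^d * (d * d / N)) := by
    rw [heq]
    calc |∑ α ∈ f.support, f.coeff α *
          ((∏ i, (((β i).descFactorial (α i) : ℕ) : ℝ)) - (N:ℝ)^d * ∏ i, x i ^ α i)|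
        ≤ ∑ α ∈ f.support, |f.coeff α *
          ((∏ i, (((β i).descFactorial (α i) : ℕ) : ℝ)) - (N:ℝ)^d * ∏ i, x i ^ α i)| :=
          Finset.abs_sum_le_sum_abs _ _
      _ ≤ ∑ α ∈ f.support, |f.coeff α| * ((N:ℝ)^d * (d * d / N)) := by
          refine Finset.sum_le_sum fun α hα => ?_
          rw [abs_mul]
          exact mul_le_mul_of_nonneg_left (hest α hα) (abs_nonneg _)
      _ = A * ((N:ℝ)^d * (d * d / N)) := by rw [← Finset.sum_mul]
  have hNd : (0:ℝ) < (N:ℝ)^d := by positivity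
  have hfinal : A * ((N:ℝ)^d * (d * d / N)) ≤ ε * (N:ℝ)^d := by
    have h1 : A * ((N:ℝ)^d * (d * d / N)) = (A * d * d) * ((N:ℝ)^d / N) := by ring
    have h2 : ((N:ℝ) * ε) * ((N:ℝ)^d / N) = ε * (N:ℝ)^d := by
      field_simp
    rw [h1, ← h2]
    exact mul_le_mul_of_nonneg_right hNε (by positivity)
  have hev2 : (N:ℝ)^d * ε ≤ (N:ℝ)^d * eval x f := mul_le_mul_of_nonneg_left hxeval hNd.le
  have h3 := abs_le.mp habs
  linarith [h3.1, hev2, hfinal]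

theorem polya (n : ℕ) (f : MvPolynomial (Fin n) ℝ) (d : ℕ)
    (hf : f.IsHomogeneous d)
    (hpos : ∀ x : Fin n → ℝ, (∀ i, 0 ≤ x i) → ∑ i, x i = 1 → 0 < eval x f) :
    ∃ k : ℕ, ∀ α : Fin n →₀ ℕ,
      0 ≤ ((∑ i, X i : MvPolynomial (Fin n) ℝ)^k * f).coeff α := by
  obtain rfl | hn := Nat.eq_zero_or_pos n
  · exact ⟨1, fun α => by simp⟩
  obtain ⟨k, hk⟩ := gNonneg n d hn f hf hpos
  refine ⟨k, fun β => ?_⟩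
  by_cases hβ : ∑ i, β i = d + k
  · have hid := keyIdentity n d k f hf β hβ
    have h1 : (0:ℝ) < ∏ i, ((β i).factorial : ℝ) :=
      Finset.prod_pos fun i _ => by exact_mod_cast (β i).factorial_pos
    have h2 : (0:ℝ) ≤ (k.factorial : ℝ) *
        ∑ α ∈ f.support, f.coeff α * ∏ i, (((β i).descFactorial (α i) : ℕ) : ℝ) :=
      mul_nonneg (Nat.cast_nonneg _) (hk β hβ)
    rw [← hid] at h2
    exact (mul_nonneg_iff_of_pos_left h1).mp h2
  · have hS : ((∑ i, X i : MvPolynomial (Fin n) ℝ)).IsHomogeneous 1 := by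
      apply IsHomogeneous.sum
      intro i _
      exact isHomogeneous_X _ _
    have hP : ((∑ i, X i : MvPolynomial (Fin n) ℝ)^k * f).IsHomogeneous (1 * k + d) :=
      (hS.pow k).mul hf
    have hd : β.degree ≠ 1 * k + d := by
      have : β.degree = ∑ i, β i :=
        Finset.sum_subset (Finset.subset_univ _)
          (fun i _ hi => Finsupp.notMem_support_iff.mp hi)
      rw [this]
      omega
    rw [hP.coeff_eq_zero hd]
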